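/- Fix α > 0, k > 0, S > 0 and a total budget decomposed as spending w₁ ≥ 0 on a 1-value battle and w_k ≥ 0 on a k-value battle with w₁ + w_k = C for a constant C > 0. The function (w₁, w_k) ↦ w₁^α/(w₁^α + S) + k·w_k^α/(w_k^α + k^α·S) restricted to w₁ + w_k = C, with C = (1+k)·w for some w > 0, is maximized at w₁ = w and w_k = k·w, provided α ≤ 1. -/

import Mathlib

open Set Real

lemma frac_concave (S : ℝ) (hS : 0 < S) :
    ConcaveOn ℝ (Set.Ici 0) (fun u : ℝ => u / (u + S)) := by
  refine ⟨convex_Ici 0, ?_⟩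
  intro x hx y hy a b ha hb hab
  simp only [smul_eq_mul] at *
  have hx0 : (0:ℝ) ≤ x := hx
  have hy0 : (0:ℝ) ≤ y := hy
  have h1 : 0 < x + S := by linarith
  have h2 : 0 < y + S := by linarith
  have h3 : 0 < a * x + b * y + S := by nlinarith
  rw [mul_div_assoc', mul_div_assoc', div_add_div _ _ h1.ne' h2.ne',
    div_le_div_iff₀ (by positivity) h3]
  have hb' : b = 1 - a := by linarith
  subst hb'
  nlinarith [mul_nonneg (mul_nonneg ha (by linarith : (0:ℝ) ≤ 1 - a))
    (mul_nonneg hS.le (sq_nonneg (x - y)))]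

lemma frac_mono (S : ℝ) (hS : 0 < S) :
    MonotoneOn (fun u : ℝ => u / (u + S)) (Set.Ici 0) := by
  intro x hx y hy hxy
  have hx0 : (0:ℝ) ≤ x := hx
  have h1 : 0 < x + S := by linarith
  have h2 : 0 < y + S := by linarith
  rw [div_le_div_iff₀ h1 h2]
  nlinarith

lemma f_concave (α S : ℝ) (hα : 0 < α) (hα1 : α ≤ 1) (hS : 0 < S) :
    ConcaveOn ℝ (Set.Ici 0) (fun x : ℝ => x ^ α / (x ^ α + S)) := by
  have himg : (fun x : ℝ => x ^ α) '' (Set.Ici 0) = Set.Ici 0 := by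
    ext y
    constructor
    · rintro ⟨x, hx, rfl⟩
      exact Real.rpow_nonneg hx α
    · intro hy
      refine ⟨y ^ α⁻¹, Real.rpow_nonneg hy _, ?_⟩
      show (y ^ α⁻¹) ^ α = y
      rw [← Real.rpow_mul hy, inv_mul_cancel₀ hα.ne', Real.rpow_one]
  exact ConcaveOn.comp (f := fun x : ℝ => x ^ α) (g := fun u : ℝ => u / (u + S))
    (by rw [himg]; exact frac_concave S hS)
    (Real.concaveOn_rpow hα.le hα1)
    (by rw [himg]; exact frac_mono S hS)

theorem stmt_6 (α k S w : ℝ) (hα : 0 < α) (hα1 : α ≤ 1) (hk : 0 < k) (hS : 0 < S)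
    (hw : 0 < w) :
    ∀ w₁ wk : ℝ, 0 ≤ w₁ → 0 ≤ wk → w₁ + wk = (1 + k) * w →
      w₁ ^ α / (w₁ ^ α + S) + k * wk ^ α / (wk ^ α + k ^ α * S) ≤
        w ^ α / (w ^ α + S) + k * (k * w) ^ α / ((k * w) ^ α + k ^ α * S) := by
  intro w₁ wk hw₁ hwk hsum
  have hconc := f_concave α S hα hα1 hS
  set f : ℝ → ℝ := fun x => x ^ α / (x ^ α + S) with hf
  have hk1 : 0 < 1 + k := by linarith
  have ha : (0:ℝ) ≤ 1 / (1 + k) := by positivity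
  have hb : (0:ℝ) ≤ k / (1 + k) := by positivity
  have hab : 1 / (1 + k) + k / (1 + k) = 1 := by field_simp
  have hkα : 0 < k ^ α := Real.rpow_pos_of_pos hk α
  have hwkα : 0 ≤ wk ^ α := Real.rpow_nonneg hwk α
  have hwα : 0 < w ^ α := Real.rpow_pos_of_pos hw α
  have hjensen := hconc.2 (Set.mem_Ici.mpr hw₁)
    (Set.mem_Ici.mpr (by positivity : (0:ℝ) ≤ wk / k)) ha hb hab
  have hcomb : (1 / (1 + k)) • w₁ + (k / (1 + k)) • (wk / k) = w := by
    simp only [smul_eq_mul]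
    field_simp
    linear_combination hsum
  rw [hcomb] at hjensen
  simp only [smul_eq_mul] at hjensen
  have e1 : k * wk ^ α / (wk ^ α + k ^ α * S) = k * f (wk / k) := by
    rw [hf]
    simp only [Real.div_rpow hwk hk.le α]
    rw [mul_div_assoc]
    congr 1
    have d1 : (0:ℝ) < wk ^ α + k ^ α * S := by positivity
    have d2 : (0:ℝ) < wk ^ α / k ^ α + S := by positivity
    rw [div_eq_div_iff d1.ne' d2.ne']
    field_simp
  have e2 : k * (k * w) ^ α / ((k * w) ^ α + k ^ α * S) = k * f w := by
    rw [hf]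
    simp only [Real.mul_rpow hk.le hw.le]
    rw [mul_div_assoc]
    congr 1
    have d1 : (0:ℝ) < k ^ α * w ^ α + k ^ α * S := by positivity
    have d2 : (0:ℝ) < w ^ α + S := by positivity
    field_simp
  rw [e1, e2]
  show f w₁ + k * f (wk / k) ≤ f w + k * f w
  have hmul := mul_le_mul_of_nonneg_left hjensen hk1.le
  calc f w₁ + k * f (wk / k)
      = (1 + k) * (1 / (1 + k) * f w₁ + k / (1 + k) * f (wk / k)) := by
        field_simp
    _ ≤ (1 + k) * f w := hmul
    _ = f w + k * f w := by ring
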